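/- For ν ≥ 0, α ≥ 1, x > 0, and λ = ν + 1 + (α−1)/2, the ratio of modified Bessel functions of the first kind satisfies I_{ν+1}(x)/I_ν(x) > x/(λ + √(λ² + x²)). -/

import Mathlib

set_option maxHeartbeats 1000000

/-- Modified Bessel function of the first kind of order ν. -/
noncomputable def besselI (ν : ℝ) (x : ℝ) : ℝ :=
  ∑' k : ℕ, (x / 2) ^ (ν + 2 * (k : ℝ)) / ((Nat.factorial k : ℝ) * Real.Gamma (ν + (k : ℝ) + 1))

open Real

noncomputable def bterm (μ x : ℝ) (k : ℕ) : ℝ :=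
  (x / 2) ^ (μ + 2 * (k : ℝ)) / ((Nat.factorial k : ℝ) * Real.Gamma (μ + (k : ℝ) + 1))

lemma bterm_pos {μ x : ℝ} (hμ : 0 ≤ μ) (hx : 0 < x) (k : ℕ) : 0 < bterm μ x k := by
  have h1 : (0:ℝ) < x / 2 := by linarith
  have h2 : (0:ℝ) < μ + (k : ℝ) + 1 := by positivity
  have := Real.Gamma_pos_of_pos h2
  have := (Nat.cast_pos (α := ℝ)).mpr (Nat.factorial_pos k)
  unfold bterm
  positivity

lemma bterm_succ {μ x : ℝ} (hμ : 0 ≤ μ) (hx : 0 < x) (k : ℕ) :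
    bterm μ x (k + 1) = bterm μ x k * ((x/2)^(2:ℕ) / (((k:ℝ) + 1) * (μ + k + 1))) := by
  have h1 : (0:ℝ) < x / 2 := by linarith
  have h2 : (0:ℝ) < μ + (k : ℝ) + 1 := by positivity
  have hG : Real.Gamma (μ + ((k:ℝ) + 1) + 1) = (μ + k + 1) * Real.Gamma (μ + k + 1) := by
    rw [show μ + ((k:ℝ) + 1) + 1 = (μ + k + 1) + 1 by ring, Real.Gamma_add_one h2.ne']
  have hpow : (x/2) ^ (μ + 2 * ((k:ℝ) + 1)) = (x/2) ^ (μ + 2 * (k:ℝ)) * (x/2)^(2:ℕ) := by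
    rw [← Real.rpow_natCast (x/2) 2, ← Real.rpow_add h1]
    ring_nf
  unfold bterm
  push_cast
  rw [hpow, hG, Nat.factorial_succ]
  have hGne := (Real.Gamma_pos_of_pos h2).ne'
  have hfne : ((Nat.factorial k : ℝ)) ≠ 0 := Nat.cast_ne_zero.mpr (Nat.factorial_ne_zero k)
  push_cast
  field_simp

lemma bterm_summable {μ x : ℝ} (hμ : 0 ≤ μ) (hx : 0 < x) : Summable (bterm μ x) := by
  apply summable_of_ratio_norm_eventually_le (r := 1/2) (by norm_num)
  have h1 : (0:ℝ) < x / 2 := by linarith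
  filter_upwards [Filter.eventually_ge_atTop (Nat.ceil (2 * (x/2)^(2:ℕ)))] with k hk
  have hb := (bterm_pos hμ hx k)
  rw [bterm_succ hμ hx k]
  rw [norm_mul, Real.norm_eq_abs, Real.norm_eq_abs, abs_of_pos hb]
  have hk' : 2 * (x/2)^(2:ℕ) ≤ (k:ℝ) + 1 := by
    calc 2 * (x/2)^(2:ℕ) ≤ (Nat.ceil (2 * (x/2)^(2:ℕ)) : ℝ) := Nat.le_ceil _
    _ ≤ (k:ℝ) := Nat.cast_le.mpr hk
    _ ≤ (k:ℝ) + 1 := by linarith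
  have hd : (0:ℝ) < ((k:ℝ) + 1) * (μ + k + 1) := by positivity
  have habs : |(x/2)^(2:ℕ) / (((k:ℝ) + 1) * (μ + k + 1))| = (x/2)^(2:ℕ) / (((k:ℝ)+1) * (μ + k + 1)) := by
    rw [abs_of_nonneg]; positivity
  rw [habs]
  rw [mul_comm]
  apply mul_le_mul_of_nonneg_right _ hb.le
  rw [div_le_iff₀ hd]
  nlinarith [sq_nonneg (x/2), hb.le]

lemma besselI_eq {μ x : ℝ} : besselI μ x = ∑' k, bterm μ x k := rfl

lemma besselI_pos {μ x : ℝ} (hμ : 0 ≤ μ) (hx : 0 < x) : 0 < besselI μ x := by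
  rw [besselI_eq]
  exact Summable.tsum_pos (bterm_summable hμ hx) (fun k => (bterm_pos hμ hx k).le) 0 (bterm_pos hμ hx 0)

lemma bterm_diff {ν x : ℝ} (hν : 0 ≤ ν) (hx : 0 < x) (k : ℕ) :
    bterm ν x (k+1) - (2*(ν+1)/x) * bterm (ν+1) x (k+1) = bterm (ν+2) x k := by
  have h1 : (0:ℝ) < x / 2 := by linarith
  have h2 : (0:ℝ) < ν + (k : ℝ) + 2 := by positivity
  have h3 : (0:ℝ) < ν + (k : ℝ) + 1 := by positivity
  have hG3 : Real.Gamma (ν + 1 + ((k:ℝ)+1) + 1) = (ν + k + 2) * Real.Gamma (ν + k + 2) := by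
    rw [show ν + 1 + ((k:ℝ)+1) + 1 = (ν + k + 2) + 1 by ring, Real.Gamma_add_one h2.ne']
  have hG1 : Real.Gamma (ν + ((k:ℝ)+1) + 1) = Real.Gamma (ν + k + 2) := by ring_nf
  have hG2 : Real.Gamma (ν + 2 + (k:ℝ) + 1) = (ν + k + 2) * Real.Gamma (ν + k + 2) := by
    rw [show ν + 2 + (k:ℝ) + 1 = (ν + k + 2) + 1 by ring, Real.Gamma_add_one h2.ne']
  have hpow1 : (x/2) ^ (ν + 1 + 2 * ((k:ℝ) + 1)) = (x/2) ^ (ν + 2*(k:ℝ) + 2) * (x/2) := by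
    rw [show ν + 1 + 2*((k:ℝ)+1) = (ν + 2*(k:ℝ) + 2) + 1 by ring, Real.rpow_add_one (ne_of_gt h1)]
  have hpow2 : (x/2) ^ (ν + 2 * ((k:ℝ) + 1)) = (x/2) ^ (ν + 2*(k:ℝ) + 2) := by ring_nf
  have hpow3 : (x/2) ^ (ν + 2 + 2 * ((k:ℝ))) = (x/2) ^ (ν + 2*(k:ℝ) + 2) := by ring_nf
  unfold bterm
  simp only [Nat.factorial_succ]
  push_cast
  rw [hG3, hG1, hG2, hpow1, hpow2, hpow3]

  have hGne := (Real.Gamma_pos_of_pos h2).ne'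
  have hfne : ((Nat.factorial k : ℝ)) ≠ 0 := Nat.cast_ne_zero.mpr (Nat.factorial_ne_zero k)
  have hxne : x ≠ 0 := hx.ne'
  have hpne := (Real.rpow_pos_of_pos h1 (ν + 2*(k:ℝ) + 2)).ne'
  push_cast
  field_simp
  ring

lemma bterm_diff0 {ν x : ℝ} (hν : 0 ≤ ν) (hx : 0 < x) :
    bterm ν x 0 - (2*(ν+1)/x) * bterm (ν+1) x 0 = 0 := by
  have h1 : (0:ℝ) < x / 2 := by linarith
  have h3 : (0:ℝ) < ν + 1 := by positivity
  have hG3 : Real.Gamma (ν + 1 + (0:ℝ) + 1) = (ν + 1) * Real.Gamma (ν + 1) := by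
    rw [show ν + 1 + (0:ℝ) + 1 = (ν + 1) + 1 by ring, Real.Gamma_add_one h3.ne']
  have hG1 : Real.Gamma (ν + (0:ℝ) + 1) = Real.Gamma (ν + 1) := by ring_nf
  unfold bterm
  push_cast
  have hGne := (Real.Gamma_pos_of_pos h3).ne'
  have hxne : x ≠ 0 := hx.ne'
  rw [hG3, hG1]
  rw [show ν + 1 + 2 * (0:ℝ) = (ν + 2*(0:ℝ)) + 1 by ring, Real.rpow_add_one (ne_of_gt h1)]
  field_simp
  ring

lemma besselI_rec {ν x : ℝ} (hν : 0 ≤ ν) (hx : 0 < x) :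
    besselI ν x = besselI (ν+2) x + (2*(ν+1)/x) * besselI (ν+1) x := by
  have hs0 : Summable (bterm ν x) := bterm_summable hν hx
  have hs1 : Summable (fun k => (2*(ν+1)/x) * bterm (ν+1) x k) :=
    (bterm_summable (by linarith) hx).mul_left _
  have hs2 : Summable (bterm (ν+2) x) := bterm_summable (by linarith) hx
  have key : ∑' k, (bterm ν x k - (2*(ν+1)/x) * bterm (ν+1) x k) = ∑' k, bterm (ν+2) x k := by
    rw [Summable.tsum_eq_zero_add (hs0.sub hs1)]
    simp only [bterm_diff hν hx, bterm_diff0 hν hx]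
    ring
  rw [besselI_eq, besselI_eq, besselI_eq]
  rw [Summable.tsum_sub hs0 hs1, tsum_mul_left] at key
  linarith

noncomputable def Scomb (a b : ℝ) (n : ℕ) : ℝ :=
  ∑ k ∈ Finset.range (n+1),
    1 / ((Nat.factorial k : ℝ) * (Nat.factorial (n-k) : ℝ) * Real.Gamma (a + k) * Real.Gamma (b + (n-k : ℕ)))

lemma Scomb_nonneg {a b : ℝ} (ha : 0 < a) (hb : 0 < b) (n : ℕ) : 0 ≤ Scomb a b n := by
  apply Finset.sum_nonneg
  intro k _
  have h1 : (0:ℝ) < a + k := by positivity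
  have h2 : (0:ℝ) < b + (n-k : ℕ) := by positivity
  have := Real.Gamma_pos_of_pos h1
  have := Real.Gamma_pos_of_pos h2
  positivity

lemma Scomb_symm (a b : ℝ) (n : ℕ) : Scomb a b n = Scomb b a n := by
  unfold Scomb
  rw [← Finset.sum_range_reflect]
  apply Finset.sum_congr rfl
  intro k hk
  have hk' : k ≤ n := Nat.lt_succ_iff.mp (Finset.mem_range.mp hk)
  have h0 : n + 1 - 1 - k = n - k := by omega
  have h1 : n - (n - k) = k := Nat.sub_sub_self hk'
  rw [h0, h1]
  ring

lemma Scomb_rec (a b : ℝ) (n : ℕ) :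
    ((n:ℝ)+1) * Scomb a b (n+1) = Scomb (a+1) b n + Scomb a (b+1) n := by
  unfold Scomb
  rw [Finset.mul_sum]
  have split : ∑ k ∈ Finset.range (n+2), ((n:ℝ)+1) *
        (1 / ((Nat.factorial k : ℝ) * (Nat.factorial (n+1-k) : ℝ) * Real.Gamma (a + k) * Real.Gamma (b + ((n+1-k : ℕ):ℝ))))
      = (∑ k ∈ Finset.range (n+2), (k:ℝ) / ((Nat.factorial k : ℝ) * (Nat.factorial (n+1-k) : ℝ) * Real.Gamma (a + k) * Real.Gamma (b + ((n+1-k : ℕ):ℝ))))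
        + ∑ k ∈ Finset.range (n+2), ((n+1-k : ℕ):ℝ) / ((Nat.factorial k : ℝ) * (Nat.factorial (n+1-k) : ℝ) * Real.Gamma (a + k) * Real.Gamma (b + ((n+1-k : ℕ):ℝ))) := by
    rw [← Finset.sum_add_distrib]
    apply Finset.sum_congr rfl
    intro k hk
    have hk' : k ≤ n + 1 := Nat.lt_succ_iff.mp (Finset.mem_range.mp hk)
    have hc : ((n+1-k : ℕ):ℝ) = (n:ℝ) + 1 - k := by
      push_cast [Nat.cast_sub hk']; ring
    rw [hc]
    ring
  rw [split]
  congr 1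
  · -- first sum: k-part, reindex
    rw [Finset.sum_range_succ' _ (n+1)]
    simp only [Nat.cast_zero, zero_div, add_zero]
    apply Finset.sum_congr rfl
    intro k hk
    have hk' : k ≤ n := Nat.lt_succ_iff.mp (Finset.mem_range.mp hk)
    have h1 : n + 1 - (k+1) = n - k := by omega
    rw [h1]
    have hGa : Real.Gamma (a + ((k+1 : ℕ):ℝ)) = Real.Gamma ((a+1) + k) := by
      congr 1; push_cast; ring
    rw [hGa]
    have hfs : ((Nat.factorial (k+1) : ℕ) : ℝ) = ((k:ℝ)+1) * (Nat.factorial k : ℝ) := by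
      push_cast [Nat.factorial_succ]; ring
    rw [hfs]
    have hcast : ((k+1 : ℕ) : ℝ) = (k:ℝ) + 1 := by push_cast; ring
    rw [hcast]
    have hD : ((k:ℝ)+1) * (Nat.factorial k : ℝ) * (Nat.factorial (n-k) : ℝ) * Real.Gamma ((a+1) + k) * Real.Gamma (b + ((n-k : ℕ):ℝ))
        = ((k:ℝ)+1) * ((Nat.factorial k : ℝ) * (Nat.factorial (n-k) : ℝ) * Real.Gamma ((a+1) + k) * Real.Gamma (b + ((n-k : ℕ):ℝ))) := by ring
    rw [hD, div_mul_eq_div_div, div_self (by positivity : (0:ℝ) < ((k:ℝ)+1)).ne']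
  · -- second sum: drop last term
    rw [Finset.sum_range_succ]
    simp only [Nat.sub_self, Nat.cast_zero, zero_div, add_zero]
    apply Finset.sum_congr rfl
    intro k hk
    have hk' : k ≤ n := Nat.lt_succ_iff.mp (Finset.mem_range.mp hk)
    have h1 : n + 1 - k = (n - k) + 1 := by omega
    rw [h1]
    have hGb : Real.Gamma (b + (((n-k)+1 : ℕ):ℝ)) = Real.Gamma ((b+1) + (n-k : ℕ)) := by
      congr 1; push_cast; ring
    rw [hGb]
    have hfs : ((Nat.factorial ((n-k)+1) : ℕ) : ℝ) = (((n-k:ℕ):ℝ)+1) * (Nat.factorial (n-k) : ℝ) := by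
      push_cast [Nat.factorial_succ]; ring
    rw [hfs]
    have hcast : (((n-k)+1 : ℕ) : ℝ) = ((n-k : ℕ):ℝ) + 1 := by push_cast; ring
    rw [hcast]
    have hD : (Nat.factorial k : ℝ) * ((((n-k:ℕ):ℝ)+1) * (Nat.factorial (n-k) : ℝ)) * Real.Gamma (a + k) * Real.Gamma ((b+1) + (n-k : ℕ))
        = (((n-k:ℕ):ℝ)+1) * ((Nat.factorial k : ℝ) * (Nat.factorial (n-k) : ℝ) * Real.Gamma (a + k) * Real.Gamma ((b+1) + (n-k : ℕ))) := by ring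
    rw [hD, div_mul_eq_div_div, div_self (by positivity : (0:ℝ) < ((n-k:ℕ):ℝ)+1).ne']

lemma Scomb_zero (a b : ℝ) : Scomb a b 0 = 1 / (Real.Gamma a * Real.Gamma b) := by
  unfold Scomb
  rw [Finset.sum_range_one]
  norm_num

lemma Scomb_mono : ∀ (n : ℕ) (a : ℝ) (m : ℕ), 0 < a →
    Scomb a (a + m + 1) n ≤ Scomb (a+1) (a + m) n := by
  intro n
  induction n with
  | zero =>
    intro a m ha
    rw [Scomb_zero, Scomb_zero]
    have hb : (0:ℝ) < a + m := by positivity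
    have hGa := Real.Gamma_pos_of_pos ha
    have hGb := Real.Gamma_pos_of_pos hb
    rw [show a + (m:ℝ) + 1 = (a + m) + 1 by ring, Real.Gamma_add_one hb.ne',
        Real.Gamma_add_one ha.ne']
    rw [div_le_div_iff₀ (by positivity) (by positivity)]
    nlinarith [mul_pos hGa hGb, Nat.cast_nonneg (α := ℝ) m]
  | succ n ih =>
    intro a m ha
    match m with
    | 0 =>
      apply le_of_eq
      rw [show a + ((0:ℕ):ℝ) + 1 = a + 1 by push_cast; ring,
          show a + ((0:ℕ):ℝ) = a by push_cast; ring]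
      exact Scomb_symm a (a+1) (n+1)
    | (m'+1) =>
      set b : ℝ := a + (m'+1 : ℕ) with hbdef
      have hb : (0:ℝ) < b := by rw [hbdef]; positivity
      have h1 := Scomb_rec a (b+1) n
      have h2 := Scomb_rec (a+1) b n
      have ihA := ih (a+1) m' (by linarith)
      have ihB := ih a (m'+2) ha
      have e1 : (a+1) + (m':ℝ) + 1 = b + 1 := by rw [hbdef]; push_cast; ring
      have e2 : (a+1) + (m':ℝ) = b := by rw [hbdef]; push_cast; ring
      have e3 : a + ((m'+2 : ℕ):ℝ) + 1 = b + 2 := by rw [hbdef]; push_cast; ring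
      have e4 : a + ((m'+2 : ℕ):ℝ) = b + 1 := by rw [hbdef]; push_cast; ring
      rw [e1, e2] at ihA
      rw [e3, e4] at ihB
      -- goal : Scomb a (b + 1) (n+1) ≤ Scomb (a+1) b (n+1)
      have hgoal : a + ((m'+1 : ℕ):ℝ) + 1 = b + 1 := by rw [hbdef]
      rw [hgoal, hbdef]
      rw [← hbdef]
      have hn : (0:ℝ) < (n:ℝ) + 1 := by positivity
      rw [show b+1+1 = b+2 by ring] at h1
      have key : ((n:ℝ)+1) * Scomb a (b+1) (n+1) ≤ ((n:ℝ)+1) * Scomb (a+1) b (n+1) := by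
        linarith [h1, h2, ihA, ihB]
      exact le_of_mul_le_mul_left key hn

lemma antidiag_eq {μ ρ x : ℝ} (hx : 0 < x) (n : ℕ) :
    ∑ kl ∈ Finset.HasAntidiagonal.antidiagonal n, bterm μ x kl.1 * bterm ρ x kl.2
      = (x/2)^(μ+ρ+2*(n:ℝ)) * Scomb (μ+1) (ρ+1) n := by
  have h1 : (0:ℝ) < x/2 := by linarith
  rw [Finset.Nat.sum_antidiagonal_eq_sum_range_succ_mk]
  unfold Scomb
  rw [Finset.mul_sum]
  apply Finset.sum_congr rfl
  intro k hk
  have hk' : k ≤ n := Nat.lt_succ_iff.mp (Finset.mem_range.mp hk)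
  unfold bterm
  rw [div_mul_div_comm, ← Real.rpow_add h1]
  rw [show μ + 2*(k:ℝ) + (ρ + 2*((n-k:ℕ):ℝ)) = μ+ρ+2*(n:ℝ) by push_cast [Nat.cast_sub hk']; ring]
  rw [show Real.Gamma (μ + (k:ℝ) + 1) = Real.Gamma ((μ+1) + k) by ring_nf]
  rw [show Real.Gamma (ρ + ((n-k:ℕ):ℝ) + 1) = Real.Gamma ((ρ+1) + ((n-k:ℕ):ℝ)) by ring_nf]
  rw [mul_one_div]
  congr 1
  ring

lemma repr_summable {μ ρ x : ℝ} (hμ : 0 ≤ μ) (hρ : 0 ≤ ρ) (hx : 0 < x) :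
    Summable (fun n : ℕ => (x/2)^(μ+ρ+2*(n:ℝ)) * Scomb (μ+1) (ρ+1) n) := by
  have hf := bterm_summable hμ hx
  have hg := bterm_summable hρ hx
  exact (summable_sum_mul_antidiagonal_of_summable_norm'
    (summable_norm_iff.mpr hf) hf (summable_norm_iff.mpr hg) hg).congr (antidiag_eq hx)

lemma prod_repr {μ ρ x : ℝ} (hμ : 0 ≤ μ) (hρ : 0 ≤ ρ) (hx : 0 < x) :
    besselI μ x * besselI ρ x = ∑' n : ℕ, (x/2)^(μ+ρ+2*(n:ℝ)) * Scomb (μ+1) (ρ+1) n := by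
  have hf := bterm_summable hμ hx
  have hg := bterm_summable hρ hx
  rw [besselI_eq, besselI_eq,
    tsum_mul_tsum_eq_tsum_sum_antidiagonal_of_summable_norm
      (summable_norm_iff.mpr hf) (summable_norm_iff.mpr hg)]
  exact tsum_congr (antidiag_eq hx)

lemma turan {ν x : ℝ} (hν : 0 ≤ ν) (hx : 0 < x) :
    besselI ν x * besselI (ν+2) x < besselI (ν+1) x ^ 2 := by
  have h1 : (0:ℝ) < x/2 := by linarith
  rw [sq, prod_repr hν (by linarith) hx,
      prod_repr (by linarith : (0:ℝ) ≤ ν+1) (by linarith : (0:ℝ) ≤ ν+1) hx]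
  rw [show ν+2+1 = ν+3 by ring, show ν+1+1 = ν+2 by ring]
  simp only [show ∀ n:ℕ, ν+(ν+2)+2*(n:ℝ) = 2*ν+2+2*(n:ℝ) from fun n => by ring,
             show ∀ n:ℕ, ν+1+(ν+1)+2*(n:ℝ) = 2*ν+2+2*(n:ℝ) from fun n => by ring]
  have hSlt : ∀ n : ℕ, Scomb (ν+1) (ν+3) n ≤ Scomb (ν+2) (ν+2) n := by
    intro n
    have h := Scomb_mono n (ν+1) 1 (by linarith)
    push_cast at h
    rw [show ν+1+1+1 = ν+3 by ring, show ν+1+1 = ν+2 by ring] at h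
    exact h
  apply Summable.tsum_lt_tsum (i := 0)
  · intro n
    exact mul_le_mul_of_nonneg_left (hSlt n) (Real.rpow_pos_of_pos h1 _).le
  · apply mul_lt_mul_of_pos_left _ (Real.rpow_pos_of_pos h1 _)
    rw [Scomb_zero, Scomb_zero]
    have hg1 : (0:ℝ) < ν + 1 := by linarith
    have hg2 : (0:ℝ) < ν + 2 := by linarith
    have hGa := Real.Gamma_pos_of_pos hg1
    rw [show ν+3 = (ν+2)+1 by ring, Real.Gamma_add_one hg2.ne',
        show ν+2 = (ν+1)+1 by ring, Real.Gamma_add_one hg1.ne']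
    rw [div_lt_div_iff₀ (by positivity) (by positivity)]
    nlinarith [mul_pos hGa hGa]
  · have := repr_summable hν (by linarith : (0:ℝ) ≤ ν+2) hx
    rw [show ν+2+1 = ν+3 by ring] at this
    exact this.congr (fun n => by rw [show ν+(ν+2)+2*(n:ℝ) = 2*ν+2+2*(n:ℝ) by ring])
  · have := repr_summable (by linarith : (0:ℝ) ≤ ν+1) (by linarith : (0:ℝ) ≤ ν+1) hx
    rw [show ν+1+1 = ν+2 by ring] at this
    exact this.congr (fun n => by rw [show ν+1+(ν+1)+2*(n:ℝ) = 2*ν+2+2*(n:ℝ) by ring])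

theorem bessel_ratio_lower_bound (ν α x : ℝ) (hν : 0 ≤ ν) (hα : 1 ≤ α) (hx : 0 < x) :
    besselI (ν + 1) x / besselI ν x >
      x / ((ν + 1 + (α - 1) / 2) + Real.sqrt ((ν + 1 + (α - 1) / 2) ^ 2 + x ^ 2)) := by
  set A := besselI ν x with hAdef
  set B := besselI (ν+1) x with hBdef
  set C := besselI (ν+2) x with hCdef
  set lam := ν + 1 + (α - 1) / 2 with hlamdef
  set s := Real.sqrt (lam^2 + x^2) with hsdef
  have hA : 0 < A := besselI_pos hν hx
  have hB : 0 < B := besselI_pos (by linarith) hx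
  have hC : 0 < C := besselI_pos (by linarith) hx
  have hT : A * C < B^2 := turan hν hx
  have hrec : A = C + 2*(ν+1)/x * B := besselI_rec hν hx
  have hrec' : x * A = x * C + 2*(ν+1) * B := by
    rw [hrec]; field_simp
  have hlam : 0 < lam := by rw [hlamdef]; linarith
  have hs1 : 0 < s := Real.sqrt_pos.mpr (by positivity)
  have hs : s^2 = lam^2 + x^2 := Real.sq_sqrt (by positivity)
  have hAB4 : 2*(ν+1)*B*A = (x*A - x*C)*A := by linear_combination (-A) * hrec'
  have hexp : 2*lam*A*B = 2*(ν+1)*A*B + (α-1)*A*B := by rw [hlamdef]; ring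
  have key : x*A^2 < x*B^2 + 2*lam*A*B := by
    nlinarith [hAB4, hexp, mul_pos hx (sub_pos.mpr hT),
      mul_nonneg (by linarith : (0:ℝ) ≤ α - 1) (mul_pos hA hB).le]
  rw [gt_iff_lt, div_lt_div_iff₀ (by linarith : (0:ℝ) < lam + s) hA]
  rcases le_or_gt (x*A - B*lam) 0 with h|h
  · nlinarith [mul_pos hB hs1]
  · have hsq : (x*A - B*lam)^2 < (B*s)^2 := by
      nlinarith [key, hx, hs, mul_pos hx (mul_pos hA hB)]
    have := lt_of_pow_lt_pow_left₀ 2 (by positivity : (0:ℝ) ≤ B*s) hsq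
    nlinarith
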